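/- Let S be a set and μ : 𝒫(S) → ℝ any set function, and let n ≥ 1. If I_n(A_1, …, A_n) = 0 for every family A_1, …, A_n of pairwise disjoint subsets of S, then I_{n+1}(A_0, A_1, …, A_n) = 0 for every family A_0, A_1, …, A_n of pairwise disjoint subsets of S. -/

import Mathlib

open Finset

/-- The `n`-th interference function of a set function `μ`:
`Iₙ(A₁, …, Aₙ) = Σ_{∅ ≠ T ⊆ {1,…,n}} (−1)^{n−|T|} μ(⋃_{i∈T} A i)`. -/
def interf {S : Type*} (μ : Set S → ℝ) (n : ℕ) (A : Fin n → Set S) : ℝ :=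
  ∑ T ∈ Finset.univ.powerset.filter (fun T : Finset (Fin n) => T ≠ ∅),
    (-1 : ℝ) ^ (n - T.card) * μ (⋃ i ∈ T, A i)

section aux

variable {S : Type*}

/-- Sum over the powerset of a mapped finset. -/
lemma sum_powerset_map' {α β : Type*} [DecidableEq α] [DecidableEq β]
    (e : α ↪ β) (s : Finset α) (f : Finset β → ℝ) :
    ∑ T ∈ (s.map e).powerset, f T = ∑ t ∈ s.powerset, f (t.map e) := by
  refine (Finset.sum_bij (fun t _ => t.map e) ?_ ?_ ?_ ?_).symm
  · intro t ht
    rw [Finset.mem_powerset] at ht ⊢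
    exact Finset.map_subset_map.2 ht
  · intro t₁ h₁ t₂ h₂ h
    exact Finset.map_injective e h
  · intro T hT
    rw [Finset.mem_powerset] at hT
    refine ⟨s.filter (fun a => e a ∈ T), Finset.mem_powerset.2 (Finset.filter_subset _ _), ?_⟩
    ext b
    simp only [Finset.mem_map, Finset.mem_filter]
    constructor
    · rintro ⟨a, ⟨_, hb⟩, rfl⟩; exact hb
    · intro hb
      obtain ⟨a, ha, rfl⟩ := Finset.mem_map.1 (hT hb)
      exact ⟨a, ⟨ha, hb⟩, rfl⟩
  · intro t ht; rfl

lemma set_biUnion_map' {α β : Type*} (e : α ↪ β) (s : Finset α) (f : β → Set S) :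
    ⋃ i ∈ s.map e, f i = ⋃ j ∈ s, f (e j) := by
  ext x; simp

/-- The "full" interference sum, over all subsets including the empty one. -/
def interfF (μ : Set S → ℝ) (n : ℕ) (A : Fin n → Set S) : ℝ :=
  ∑ T ∈ (Finset.univ : Finset (Fin n)).powerset,
    (-1 : ℝ) ^ (n - T.card) * μ (⋃ i ∈ T, A i)

lemma interfF_eq (μ : Set S → ℝ) (n : ℕ) (A : Fin n → Set S) :
    interfF μ n A = (-1 : ℝ) ^ n * μ ∅ + interf μ n A := by
  classical
  unfold interfF interf
  rw [← Finset.sum_filter_add_sum_filter_not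
        ((Finset.univ : Finset (Fin n)).powerset) (fun T : Finset (Fin n) => T ≠ ∅)]
  rw [add_comm]
  congr 1
  have hone : ((Finset.univ : Finset (Fin n)).powerset.filter
      (fun T : Finset (Fin n) => ¬ T ≠ ∅)) = {∅} := by
    ext T; simp
  rw [hone]
  simp

def e2 (m : ℕ) : Fin m ↪ Fin (m + 2) :=
  ⟨fun j => j.succ.succ, fun a b h => by
    exact Fin.succ_injective _ (Fin.succ_injective _ h)⟩

def e1 (m : ℕ) : Fin m ↪ Fin (m + 1) :=
  ⟨Fin.succ, Fin.succ_injective _⟩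

lemma univ_eq2 (m : ℕ) :
    (Finset.univ : Finset (Fin (m + 2)))
      = insert 0 (insert 1 ((Finset.univ : Finset (Fin m)).map (e2 m))) := by
  ext x
  simp only [Finset.mem_univ, Finset.mem_insert, Finset.mem_map, true_iff]
  induction x using Fin.cases with
  | zero => exact Or.inl rfl
  | succ i =>
    induction i using Fin.cases with
    | zero => exact Or.inr (Or.inl rfl)
    | succ j => exact Or.inr (Or.inr ⟨j, trivial, rfl⟩)

lemma univ_eq1 (m : ℕ) :
    (Finset.univ : Finset (Fin (m + 1)))
      = insert 0 ((Finset.univ : Finset (Fin m)).map (e1 m)) := by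
  ext x
  simp only [Finset.mem_univ, Finset.mem_insert, Finset.mem_map, true_iff]
  induction x using Fin.cases with
  | zero => exact Or.inl rfl
  | succ i => exact Or.inr ⟨i, trivial, rfl⟩

lemma one_not_mem_map2 (m : ℕ) (t : Finset (Fin m)) : (1 : Fin (m + 2)) ∉ t.map (e2 m) := by
  simp only [Finset.mem_map, not_exists]
  rintro j ⟨hj, hj2⟩
  have : j.succ = (0 : Fin (m + 1)) := by
    apply Fin.succ_injective
    rw [Fin.succ_zero_eq_one]
    exact hj2
  exact (Fin.succ_ne_zero j) this

lemma zero_not_mem_map2 (m : ℕ) (t : Finset (Fin m)) : (0 : Fin (m + 2)) ∉ t.map (e2 m) := by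
  simp only [Finset.mem_map, not_exists]
  rintro j ⟨hj, hj2⟩
  exact (Fin.succ_ne_zero j.succ) hj2

lemma zero_not_mem_ins (m : ℕ) (t : Finset (Fin m)) :
    (0 : Fin (m + 2)) ∉ insert 1 (t.map (e2 m)) := by
  simp only [Finset.mem_insert, not_or]
  exact ⟨by simp [Fin.ext_iff], zero_not_mem_map2 m t⟩

lemma zero_not_mem_map1 (m : ℕ) (t : Finset (Fin m)) : (0 : Fin (m + 1)) ∉ t.map (e1 m) := by
  simp only [Finset.mem_map, not_exists]
  rintro j ⟨hj, hj2⟩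
  exact (Fin.succ_ne_zero j) hj2

/-- The key recursion: `I_{m+2}` in terms of full sums `I_{m+1}`. -/
lemma interfF_succ (μ : Set S → ℝ) (m : ℕ) (A : Fin (m + 2) → Set S) :
    interfF μ (m + 2) A
      = interfF μ (m + 1) (Fin.cons (A 0 ∪ A 1) (fun j => A j.succ.succ))
        - interfF μ (m + 1) (Fin.cons (A 0) (fun j => A j.succ.succ))
        - interfF μ (m + 1) (Fin.cons (A 1) (fun j => A j.succ.succ)) := by
  classical
  unfold interfF
  rw [univ_eq2, univ_eq1]
  rw [Finset.sum_powerset_insert (zero_not_mem_ins m Finset.univ)]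
  rw [Finset.sum_powerset_insert (one_not_mem_map2 m Finset.univ)]
  rw [Finset.sum_powerset_insert (one_not_mem_map2 m Finset.univ)
      (fun T => (-1 : ℝ) ^ (m + 2 - (insert 0 T).card) * μ (⋃ i ∈ insert 0 T, A i))]
  rw [Finset.sum_powerset_insert (zero_not_mem_map1 m Finset.univ)]
  rw [Finset.sum_powerset_insert (zero_not_mem_map1 m Finset.univ)]
  rw [Finset.sum_powerset_insert (zero_not_mem_map1 m Finset.univ)]
  rw [sum_powerset_map' (e2 m), sum_powerset_map' (e2 m),
      sum_powerset_map' (e2 m), sum_powerset_map' (e2 m),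
      sum_powerset_map' (e1 m), sum_powerset_map' (e1 m),
      sum_powerset_map' (e1 m), sum_powerset_map' (e1 m),
      sum_powerset_map' (e1 m), sum_powerset_map' (e1 m)]
  rw [← Finset.sum_add_distrib, ← Finset.sum_add_distrib, ← Finset.sum_add_distrib,
      ← Finset.sum_add_distrib, ← Finset.sum_add_distrib, ← Finset.sum_add_distrib,
      ← Finset.sum_sub_distrib, ← Finset.sum_sub_distrib]
  apply Finset.sum_congr rfl
  intro t ht
  have hc : t.card ≤ m := by
    have := Finset.card_le_card (Finset.mem_powerset.1 ht)
    simpa using this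
  have hcard2 : (t.map (e2 m)).card = t.card := Finset.card_map _
  have hcard1 : (t.map (e1 m)).card = t.card := Finset.card_map _
  have h1 : (insert (1 : Fin (m + 2)) (t.map (e2 m))).card = t.card + 1 := by
    rw [Finset.card_insert_of_notMem (one_not_mem_map2 m t), hcard2]
  have h01 : (insert (0 : Fin (m + 2)) (t.map (e2 m))).card = t.card + 1 := by
    rw [Finset.card_insert_of_notMem (zero_not_mem_map2 m t), hcard2]
  have h011 : (insert (0 : Fin (m + 2)) (insert 1 (t.map (e2 m)))).card = t.card + 2 := by
    rw [Finset.card_insert_of_notMem (zero_not_mem_ins m t), h1]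
  have h0' : (insert (0 : Fin (m + 1)) (t.map (e1 m))).card = t.card + 1 := by
    rw [Finset.card_insert_of_notMem (zero_not_mem_map1 m t), hcard1]
  -- unions
  have hU2 : ⋃ i ∈ t.map (e2 m), A i = ⋃ j ∈ t, A j.succ.succ := by
    have := set_biUnion_map' (S := S) (e2 m) t A
    rw [this]; rfl
  have hU1 : ∀ X : Fin (m + 1) → Set S,
      ⋃ i ∈ t.map (e1 m), X i = ⋃ j ∈ t, X j.succ := by
    intro X
    have := set_biUnion_map' (S := S) (e1 m) t X
    simpa [e1] using this
  rw [Finset.set_biUnion_insert, Finset.set_biUnion_insert, Finset.set_biUnion_insert,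
      Finset.set_biUnion_insert, Finset.set_biUnion_insert, Finset.set_biUnion_insert,
      Finset.set_biUnion_insert]
  rw [hU2, hU1, hU1, hU1]
  simp only [Fin.cons_zero, Fin.cons_succ]
  rw [h1, h01, h011, h0', hcard2, hcard1]
  have e2' : m + 2 - t.card = (m - t.card) + 2 := by omega
  have e1' : m + 2 - (t.card + 1) = (m - t.card) + 1 := by omega
  have e1'' : m + 1 - t.card = (m - t.card) + 1 := by omega
  have ee0 : m + 2 - (t.card + 2) = m - t.card := by omega
  have ee0' : m + 1 - (t.card + 1) = m - t.card := by omega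
  rw [e2', e1', e1'', ee0, ee0']
  rw [Set.union_assoc]
  ring

lemma disj_cons (m : ℕ) (X : Set S) (A : Fin (m + 2) → Set S)
    (hA : ∀ i j, i ≠ j → Disjoint (A i) (A j))
    (hX : ∀ k : Fin m, Disjoint X (A k.succ.succ)) :
    ∀ i j, i ≠ j →
      Disjoint ((Fin.cons X (fun j => A j.succ.succ) : Fin (m + 1) → Set S) i)
        ((Fin.cons X (fun j => A j.succ.succ) : Fin (m + 1) → Set S) j) := by
  intro i j hij
  induction i using Fin.cases with
  | zero =>
    induction j using Fin.cases with
    | zero => exact absurd rfl hij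
    | succ k =>
      rw [Fin.cons_zero, Fin.cons_succ]
      exact hX k
  | succ k =>
    induction j using Fin.cases with
    | zero =>
      rw [Fin.cons_zero, Fin.cons_succ]
      exact (hX k).symm
    | succ l =>
      rw [Fin.cons_succ, Fin.cons_succ]
      apply hA
      intro hkl
      apply hij
      have : k = l := Fin.succ_injective _ (Fin.succ_injective _ hkl)
      rw [this]

end aux

/-- If `Iₙ` vanishes on every family of `n` pairwise disjoint subsets of `S` (with `n ≥ 1`),
then `I_{n+1}` vanishes on every family of `n + 1` pairwise disjoint subsets of `S`. -/
theorem interf_succ_vanishes {S : Type*} (μ : Set S → ℝ) (n : ℕ) (hn : 1 ≤ n)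
    (h : ∀ A : Fin n → Set S,
      (∀ i j, i ≠ j → Disjoint (A i) (A j)) → interf μ n A = 0) :
    ∀ A : Fin (n + 1) → Set S,
      (∀ i j, i ≠ j → Disjoint (A i) (A j)) → interf μ (n + 1) A = 0 := by
  obtain ⟨m, rfl⟩ : ∃ m, n = m + 1 := ⟨n - 1, by omega⟩
  intro A hA
  -- the three auxiliary families
  set B : Fin (m + 1) → Set S := Fin.cons (A 0 ∪ A 1) (fun j => A j.succ.succ) with hB
  set C : Fin (m + 1) → Set S := Fin.cons (A 0) (fun j => A j.succ.succ) with hC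
  set D : Fin (m + 1) → Set S := Fin.cons (A 1) (fun j => A j.succ.succ) with hD
  have hne2 : ∀ k : Fin m, (0 : Fin (m + 2)) ≠ k.succ.succ :=
    fun k => fun h => (Fin.succ_ne_zero k.succ) h.symm
  have hne1 : ∀ k : Fin m, (1 : Fin (m + 2)) ≠ k.succ.succ := by
    intro k hk
    have h0 : (0 : Fin (m + 1)).succ = k.succ.succ := by
      rw [Fin.succ_zero_eq_one]; exact hk
    exact (Fin.succ_ne_zero k) ((Fin.succ_injective _) h0).symm
  have hBd := disj_cons m (A 0 ∪ A 1) A hA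
    (fun k => Disjoint.union_left (hA 0 _ (hne2 k)) (hA 1 _ (hne1 k)))
  have hCd := disj_cons m (A 0) A hA (fun k => hA 0 _ (hne2 k))
  have hDd := disj_cons m (A 1) A hA (fun k => hA 1 _ (hne1 k))
  have key := interfF_succ μ m A
  rw [interfF_eq, interfF_eq, interfF_eq, interfF_eq] at key
  rw [← hB, ← hC, ← hD] at key
  rw [h B hBd, h C hCd, h D hDd] at key
  have hpow : ((-1 : ℝ)) ^ (m + 2) = -((-1 : ℝ)) ^ (m + 1) := by
    rw [pow_succ]; ring
  rw [hpow] at key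
  have : interf μ (m + 2) A = 0 := by linarith
  exact this
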